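/- Every block diagonally dominant Hermitian matrix is positive semidefinite. -/

import Mathlib

set_option synthInstance.maxHeartbeats 1000000
set_option maxHeartbeats 1000000

open Matrix Finset
open scoped ComplexOrder

/-- The `ℓ²` operator norm of a square complex matrix. -/
noncomputable def matOpNorm {r : ℕ} (A : Matrix (Fin r) (Fin r) ℂ) : ℝ :=
  ‖(Matrix.toEuclideanCLM (𝕜 := ℂ) A : EuclideanSpace ℂ (Fin r) →L[ℂ] EuclideanSpace ℂ (Fin r))‖

/-- A Hermitian block matrix (given by its `r × r` blocks) is block diagonally dominant
if for every `i`, `M i i ⪰ (∑_{j ≠ i} ‖M i j‖) · I`. -/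
def IsBDD {n r : ℕ} (M : Fin n → Fin n → Matrix (Fin r) (Fin r) ℂ) : Prop :=
  ∀ i, (M i i - (∑ j ∈ Finset.univ.erase i, matOpNorm (M i j)) •
      (1 : Matrix (Fin r) (Fin r) ℂ)).PosSemidef

/-- Flatten a block matrix into an ordinary matrix. -/
def flatten {n r : ℕ} (M : Fin n → Fin n → Matrix (Fin r) (Fin r) ℂ) :
    Matrix (Fin n × Fin r) (Fin n × Fin r) ℂ :=
  Matrix.of fun p q => M p.1 q.1 p.2 q.2

lemma sym_ineq {ι : Type*} [Fintype ι] [DecidableEq ι] (m : ι → ι → ℝ) (a : ι → ℝ)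
    (hm : ∀ i j, 0 ≤ m i j) (hsym : ∀ i j, m i j = m j i) :
    0 ≤ ∑ i, ∑ j ∈ Finset.univ.erase i, (m i j * a i ^ 2 - m i j * (a i * a j)) := by
  have hswap : ∀ f : ι → ι → ℝ, (∑ i, ∑ j ∈ Finset.univ.erase i, f i j)
      = ∑ j, ∑ i ∈ Finset.univ.erase j, f i j := by
    intro f
    exact Finset.sum_comm' (by intro x y; simp [ne_comm])
  have key : (∑ i, ∑ j ∈ Finset.univ.erase i, m i j * (a i - a j)^2)
      = 2 * ∑ i, ∑ j ∈ Finset.univ.erase i, (m i j * a i ^ 2 - m i j * (a i * a j)) := by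
    have h2 : (∑ i, ∑ j ∈ Finset.univ.erase i, (m i j * a j ^ 2 - m i j * (a j * a i)))
        = ∑ i, ∑ j ∈ Finset.univ.erase i, (m i j * a i ^ 2 - m i j * (a i * a j)) := by
      rw [hswap (fun i j => m i j * a j ^ 2 - m i j * (a j * a i))]
      refine Finset.sum_congr rfl fun j _ => Finset.sum_congr rfl fun i _ => ?_
      rw [hsym i j]
    calc (∑ i, ∑ j ∈ Finset.univ.erase i, m i j * (a i - a j)^2)
        = ∑ i, ∑ j ∈ Finset.univ.erase i,
            ((m i j * a i ^ 2 - m i j * (a i * a j)) + (m i j * a j ^ 2 - m i j * (a j * a i))) := by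
          refine Finset.sum_congr rfl fun i _ => Finset.sum_congr rfl fun j _ => ?_; ring
      _ = (∑ i, ∑ j ∈ Finset.univ.erase i, (m i j * a i ^ 2 - m i j * (a i * a j)))
          + ∑ i, ∑ j ∈ Finset.univ.erase i, (m i j * a j ^ 2 - m i j * (a j * a i)) := by
          simp [Finset.sum_add_distrib]
      _ = _ := by rw [h2]; ring
  nlinarith [Finset.sum_nonneg (fun i (_ : i ∈ (Finset.univ : Finset ι)) =>
    Finset.sum_nonneg (fun j (_ : j ∈ Finset.univ.erase i) =>
      mul_nonneg (hm i j) (sq_nonneg (a i - a j))))]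

lemma matOpNorm_conjTranspose {r : ℕ} (A : Matrix (Fin r) (Fin r) ℂ) :
    matOpNorm Aᴴ = matOpNorm A := by
  unfold matOpNorm
  rw [show Aᴴ = star A from rfl, map_star, ContinuousLinearMap.star_eq_adjoint,
    LinearIsometryEquiv.norm_map]

lemma dotProduct_eq_inner {r : ℕ} (A : Matrix (Fin r) (Fin r) ℂ) (u v : Fin r → ℂ) :
    (star u) ⬝ᵥ (A *ᵥ v) =
      inner ℂ ((WithLp.equiv 2 _).symm u : EuclideanSpace ℂ (Fin r))
        (Matrix.toEuclideanCLM (𝕜 := ℂ) A ((WithLp.equiv 2 _).symm v)) := by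
  exact dotProduct_comm _ _

/-- Every block diagonally dominant Hermitian matrix is positive semidefinite. -/
theorem stmt_8 {n r : ℕ} (M : Fin n → Fin n → Matrix (Fin r) (Fin r) ℂ)
    (hHerm : ∀ i j, (M i j)ᴴ = M j i) (hbdd : IsBDD M) :
    (flatten M).PosSemidef := by
  have hherm : (flatten M).IsHermitian := by
    ext p q
    have := congrFun (congrFun (hHerm q.1 p.1) p.2) q.2
    simpa [flatten, Matrix.conjTranspose_apply] using this
  refine posSemidef_iff_dotProduct_mulVec.mpr ⟨hherm, fun x => ?_⟩
  set T : ℂ := star x ⬝ᵥ (flatten M *ᵥ x) with hT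
  -- block pieces
  set q : Fin n → Fin n → ℂ :=
    fun i j => (star (fun k => x (i, k))) ⬝ᵥ (M i j *ᵥ fun l => x (j, l)) with hq
  have hdecomp : T = ∑ i, ∑ j, q i j := by
    simp only [hT, hq, dotProduct, mulVec, flatten, Matrix.of_apply, Pi.star_apply,
      Fintype.sum_prod_type, Finset.mul_sum]
    refine Finset.sum_congr rfl fun i _ => ?_
    rw [Finset.sum_comm]
  set y : Fin n → EuclideanSpace ℂ (Fin r) :=
    fun i => (WithLp.equiv 2 _).symm (fun k => x (i, k)) with hy
  set a : Fin n → ℝ := fun i => ‖y i‖ with ha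
  set m : Fin n → Fin n → ℝ := fun i j => matOpNorm (M i j) with hm
  have hmnn : ∀ i j, 0 ≤ m i j := fun i j => norm_nonneg _
  have hmsym : ∀ i j, m i j = m j i := by
    intro i j
    simp only [hm]
    rw [← hHerm i j, matOpNorm_conjTranspose]
  -- imaginary part vanishes
  have him : T.im = 0 := by
    have hstar : star T = T := by
      rw [hT, ← star_dotProduct, star_mulVec, ← dotProduct_mulVec, hherm.eq]
    have := congrArg Complex.im hstar
    simp only [Complex.star_def, Complex.conj_im] at this
    linarith
  -- diagonal bound
  have hdiag : ∀ i, (∑ j ∈ Finset.univ.erase i, m i j) * a i ^ 2 ≤ (q i i).re := by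
    intro i
    have h := (hbdd i).dotProduct_mulVec_nonneg (fun k => x (i, k))
    set c : ℝ := ∑ j ∈ Finset.univ.erase i, matOpNorm (M i j) with hc
    have hre := (RCLike.nonneg_iff (K := ℂ)).mp h |>.1
    rw [Matrix.sub_mulVec, dotProduct_sub, Matrix.smul_mulVec, Matrix.one_mulVec] at hre
    have hinner : (star (fun k => x (i, k))) ⬝ᵥ (fun k => x (i, k)) = inner ℂ (y i) (y i) := by
      rw [hy]; exact dotProduct_comm _ _
    rw [dotProduct_smul, hinner] at hre
    have h1 : ((c • (inner ℂ (y i) (y i) : ℂ))).re = c * ‖y i‖ ^ 2 := by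
      rw [inner_self_eq_norm_sq_to_K (𝕜 := ℂ) (y i), Complex.real_smul]
      simp [Complex.mul_re, ← Complex.ofReal_pow]
    rw [map_sub] at hre
    simp only [RCLike.re_to_complex] at hre
    rw [h1] at hre
    simp only [ha]
    linarith [hre]
  -- off-diagonal bound
  have hoff : ∀ i j, -(m i j * (a i * a j)) ≤ (q i j).re := by
    intro i j
    have hqi : q i j = inner ℂ (y i) (Matrix.toEuclideanCLM (𝕜 := ℂ) (M i j) (y j)) := by
      rw [hq, hy]; exact dotProduct_eq_inner _ _ _
    have h1 : ‖q i j‖ ≤ m i j * (a i * a j) := by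
      rw [hqi]
      calc ‖(inner ℂ (y i) (Matrix.toEuclideanCLM (𝕜 := ℂ) (M i j) (y j)) : ℂ)‖
          ≤ ‖y i‖ * ‖Matrix.toEuclideanCLM (𝕜 := ℂ) (M i j) (y j)‖ := norm_inner_le_norm _ _
        _ ≤ ‖y i‖ * (matOpNorm (M i j) * ‖y j‖) := by
            refine mul_le_mul_of_nonneg_left ?_ (norm_nonneg _)
            exact (Matrix.toEuclideanCLM (𝕜 := ℂ) (M i j)).le_opNorm (y j)
        _ = m i j * (a i * a j) := by rw [hm, ha]; ring
    have h2 : -‖q i j‖ ≤ (q i j).re := by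
      have h3 := Complex.abs_re_le_norm (q i j)
      have h4 := neg_abs_le ((q i j).re)
      linarith
    linarith
  -- put it together
  have hre : 0 ≤ T.re := by
    have hTre : T.re = ∑ i, ∑ j, (q i j).re := by
      rw [hdecomp]
      simp [Complex.re_sum]
    have hsplit : ∀ i, (∑ j, (q i j).re) =
        (q i i).re + ∑ j ∈ Finset.univ.erase i, (q i j).re := by
      intro i
      exact (Finset.add_sum_erase _ _ (Finset.mem_univ i)).symm
    have hlow : ∀ i, ∑ j ∈ Finset.univ.erase i,
        (m i j * a i ^ 2 - m i j * (a i * a j)) ≤ ∑ j, (q i j).re := by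
      intro i
      rw [hsplit i]
      have hd := hdiag i
      have h1 : ∑ j ∈ Finset.univ.erase i, (m i j * a i ^ 2 - m i j * (a i * a j)) =
          (∑ j ∈ Finset.univ.erase i, m i j) * a i ^ 2
            + ∑ j ∈ Finset.univ.erase i, (-(m i j * (a i * a j))) := by
        rw [Finset.sum_sub_distrib, Finset.sum_mul]
        simp [sub_eq_add_neg]
      rw [h1]
      refine add_le_add hd (Finset.sum_le_sum fun j _ => hoff i j)
    have hmain := sym_ineq m a hmnn hmsym
    rw [hTre]
    calc (0:ℝ) ≤ ∑ i, ∑ j ∈ Finset.univ.erase i, (m i j * a i ^ 2 - m i j * (a i * a j)) := hmain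
      _ ≤ ∑ i, ∑ j, (q i j).re := Finset.sum_le_sum fun i _ => hlow i
  rw [RCLike.nonneg_iff (K := ℂ)]
  exact ⟨hre, him⟩
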